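/- If the 4×4 matrix A (as defined) is positive semidefinite, then per(A) ≥ 1 + 2Re(y·w·z̄) + |y|² + |z|² + |w|², and moreover 1 + 2Re(y·w·z̄) + |y|² + |z|² + |w|² ≥ 0. -/

import Mathlib

open Matrix Complex ComplexOrder

private lemma sumPerm {α : Type*} [AddCommMonoid α] (n : ℕ) (f : Equiv.Perm (Fin (n+1)) → α) :
    ∑ σ : Equiv.Perm (Fin (n+1)), f σ
      = ∑ p : Fin (n+1), ∑ σ : Equiv.Perm (Fin n), f (Equiv.Perm.decomposeFin.symm (p, σ)) := by
  rw [Fintype.sum_equiv Equiv.Perm.decomposeFin f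
    (fun p => f (Equiv.Perm.decomposeFin.symm p)) (by simp), Fintype.sum_prod_type]

private lemma dtwo {n : ℕ} (e : Equiv.Perm (Fin (n+2))) (p : Fin (n+3)) :
    Equiv.Perm.decomposeFin.symm (p, e) 2 = Equiv.swap 0 p (e 1).succ := by
  rw [← Fin.succ_one_eq_two, Equiv.Perm.decomposeFin_symm_apply_succ]

private lemma dthree (e : Equiv.Perm (Fin 3)) (p : Fin 4) :
    Equiv.Perm.decomposeFin.symm (p, e) 3 = Equiv.swap 0 p (e 2).succ := by
  rw [show (3 : Fin 4) = Fin.succ 2 from rfl, Equiv.Perm.decomposeFin_symm_apply_succ]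

set_option maxHeartbeats 2000000 in
private lemma perm4 (M : Matrix (Fin 4) (Fin 4) ℂ) :
    M.permanent =
      M 0 0 * M 1 1 * M 2 2 * M 3 3 +
      M 0 0 * M 1 1 * M 3 2 * M 2 3 +
      M 0 0 * M 2 1 * M 1 2 * M 3 3 +
      M 0 0 * M 2 1 * M 3 2 * M 1 3 +
      M 0 0 * M 3 1 * M 1 2 * M 2 3 +
      M 0 0 * M 3 1 * M 2 2 * M 1 3 +
      M 1 0 * M 0 1 * M 2 2 * M 3 3 +
      M 1 0 * M 0 1 * M 3 2 * M 2 3 +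
      M 1 0 * M 2 1 * M 0 2 * M 3 3 +
      M 1 0 * M 2 1 * M 3 2 * M 0 3 +
      M 1 0 * M 3 1 * M 0 2 * M 2 3 +
      M 1 0 * M 3 1 * M 2 2 * M 0 3 +
      M 2 0 * M 0 1 * M 1 2 * M 3 3 +
      M 2 0 * M 0 1 * M 3 2 * M 1 3 +
      M 2 0 * M 1 1 * M 0 2 * M 3 3 +
      M 2 0 * M 1 1 * M 3 2 * M 0 3 +
      M 2 0 * M 3 1 * M 0 2 * M 1 3 +
      M 2 0 * M 3 1 * M 1 2 * M 0 3 +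
      M 3 0 * M 0 1 * M 1 2 * M 2 3 +
      M 3 0 * M 0 1 * M 2 2 * M 1 3 +
      M 3 0 * M 1 1 * M 0 2 * M 2 3 +
      M 3 0 * M 1 1 * M 2 2 * M 0 3 +
      M 3 0 * M 2 1 * M 0 2 * M 1 3 +
      M 3 0 * M 2 1 * M 1 2 * M 0 3 := by
  rw [Matrix.permanent]
  simp only [sumPerm]
  simp (config := { decide := true }) [Fin.sum_univ_succ, Fin.prod_univ_four,
    Equiv.Perm.decomposeFin_symm_apply_zero, Equiv.Perm.decomposeFin_symm_apply_one,
    dtwo, dthree, Equiv.swap_apply_def,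
    show (Fin.succ 2 : Fin 4) = 3 from rfl, show (Fin.succ 1 : Fin 4) = 2 from rfl,
    show (Fin.succ 0 : Fin 4) = 1 from rfl, show (Fin.succ 1 : Fin 3) = 2 from rfl,
    show (Fin.succ 0 : Fin 3) = 1 from rfl, show (Fin.succ 0 : Fin 2) = 1 from rfl]
  ring

set_option maxHeartbeats 4000000 in
set_option maxRecDepth 4000 in
private lemma key1 (x t u y z w : ℂ) (e0 e1 e2 f0 f1 f2 g0 g1 g2 : ℂ)
    (hy : y = (starRingEnd ℂ) e0 * f0 + (starRingEnd ℂ) e1 * f1 + (starRingEnd ℂ) e2 * f2)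
    (hz : z = (starRingEnd ℂ) e0 * g0 + (starRingEnd ℂ) e1 * g1 + (starRingEnd ℂ) e2 * g2)
    (hw : w = (starRingEnd ℂ) f0 * g0 + (starRingEnd ℂ) f1 * g1 + (starRingEnd ℂ) f2 * g2)
    (hne : (starRingEnd ℂ) e0 * e0 + (starRingEnd ℂ) e1 * e1 + (starRingEnd ℂ) e2 * e2 = 1)
    (hnf : (starRingEnd ℂ) f0 * f0 + (starRingEnd ℂ) f1 * f1 + (starRingEnd ℂ) f2 * f2 = 1)
    (hng : (starRingEnd ℂ) g0 * g0 + (starRingEnd ℂ) g1 * g1 + (starRingEnd ℂ) g2 * g2 = 1) :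
    1 + (starRingEnd ℂ) w * w + (starRingEnd ℂ) t * t + (starRingEnd ℂ) t * (starRingEnd ℂ) w * u + (starRingEnd ℂ) u * t * w + (starRingEnd ℂ) u * u + (starRingEnd ℂ) x * x + (starRingEnd ℂ) x * x * (starRingEnd ℂ) w * w + (starRingEnd ℂ) x * (starRingEnd ℂ) t * y + (starRingEnd ℂ) x * (starRingEnd ℂ) t * (starRingEnd ℂ) w * z + (starRingEnd ℂ) x * (starRingEnd ℂ) u * y * w + (starRingEnd ℂ) x * (starRingEnd ℂ) u * z + (starRingEnd ℂ) y * x * t + (starRingEnd ℂ) y * x * (starRingEnd ℂ) w * u + (starRingEnd ℂ) y * y + (starRingEnd ℂ) y * (starRingEnd ℂ) w * z + (starRingEnd ℂ) y * (starRingEnd ℂ) u * y * u + (starRingEnd ℂ) y * (starRingEnd ℂ) u * t * z + (starRingEnd ℂ) z * x * t * w + (starRingEnd ℂ) z * x * u + (starRingEnd ℂ) z * y * w + (starRingEnd ℂ) z * z + (starRingEnd ℂ) z * (starRingEnd ℂ) t * y * u + (starRingEnd ℂ) z * (starRingEnd ℂ) t * t * z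
    = (1 + y * w * (starRingEnd ℂ) z + (starRingEnd ℂ) y * (starRingEnd ℂ) w * z + y * (starRingEnd ℂ) y + z * (starRingEnd ℂ) z + w * (starRingEnd ℂ) w) + ((starRingEnd ℂ) ((starRingEnd ℂ) x * (f0 * g0 + g0 * f0) + t * (e0 * g0 + g0 * e0) + u * (e0 * f0 + f0 * e0)) * ((starRingEnd ℂ) x * (f0 * g0 + g0 * f0) + t * (e0 * g0 + g0 * e0) + u * (e0 * f0 + f0 * e0)) + (starRingEnd ℂ) ((starRingEnd ℂ) x * (f0 * g1 + g0 * f1) + t * (e0 * g1 + g0 * e1) + u * (e0 * f1 + f0 * e1)) * ((starRingEnd ℂ) x * (f0 * g1 + g0 * f1) + t * (e0 * g1 + g0 * e1) + u * (e0 * f1 + f0 * e1)) + (starRingEnd ℂ) ((starRingEnd ℂ) x * (f0 * g2 + g0 * f2) + t * (e0 * g2 + g0 * e2) + u * (e0 * f2 + f0 * e2)) * ((starRingEnd ℂ) x * (f0 * g2 + g0 * f2) + t * (e0 * g2 + g0 * e2) + u * (e0 * f2 + f0 * e2)) + (starRingEnd ℂ) ((starRingEnd ℂ) x * (f1 * g0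 + g1 * f0) + t * (e1 * g0 + g1 * e0) + u * (e1 * f0 + f1 * e0)) * ((starRingEnd ℂ) x * (f1 * g0 + g1 * f0) + t * (e1 * g0 + g1 * e0) + u * (e1 * f0 + f1 * e0)) + (starRingEnd ℂ) ((starRingEnd ℂ) x * (f1 * g1 + g1 * f1) + t * (e1 * g1 + g1 * e1) + u * (e1 * f1 + f1 * e1)) * ((starRingEnd ℂ) x * (f1 * g1 + g1 * f1) + t * (e1 * g1 + g1 * e1) + u * (e1 * f1 + f1 * e1)) + (starRingEnd ℂ) ((starRingEnd ℂ) x * (f1 * g2 + g1 * f2) + t * (e1 * g2 + g1 * e2) + u * (e1 * f2 + f1 * e2)) * ((starRingEnd ℂ) x * (f1 * g2 + g1 * f2) + t * (e1 * g2 + g1 * e2) + u * (e1 * f2 + f1 * e2)) + (starRingEnd ℂ) ((starRingEnd ℂ) x * (f2 * g0 + g2 * f0) + t * (e2 * g0 + g2 * e0) + u * (e2 * f0 + f2 * e0)) * ((starRingEnd ℂ) x * (f2 * g0 + g2 * f0) + t * (e2 * g0 + g2 * e0) + u * (e2 * f0 + f2 * e0)) + (starRingEnd ℂ) ((starRingEnd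 ℂ) x * (f2 * g1 + g2 * f1) + t * (e2 * g1 + g2 * e1) + u * (e2 * f1 + f2 * e1)) * ((starRingEnd ℂ) x * (f2 * g1 + g2 * f1) + t * (e2 * g1 + g2 * e1) + u * (e2 * f1 + f2 * e1)) + (starRingEnd ℂ) ((starRingEnd ℂ) x * (f2 * g2 + g2 * f2) + t * (e2 * g2 + g2 * e2) + u * (e2 * f2 + f2 * e2)) * ((starRingEnd ℂ) x * (f2 * g2 + g2 * f2) + t * (e2 * g2 + g2 * e2) + u * (e2 * f2 + f2 * e2))) / 2 := by
  subst hy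
  subst hz
  subst hw
  simp only [_root_.map_add, _root_.map_mul, Complex.conj_conj]
  linear_combination (-(t * (starRingEnd ℂ) t + u * (starRingEnd ℂ) u + t * ((starRingEnd ℂ) f0 * g0 + (starRingEnd ℂ) f1 * g1 + (starRingEnd ℂ) f2 * g2) * (starRingEnd ℂ) u + (starRingEnd ℂ) t * (f0 * (starRingEnd ℂ) g0 + f1 * (starRingEnd ℂ) g1 + f2 * (starRingEnd ℂ) g2) * u)) * hne + (-(x * (starRingEnd ℂ) x + u * (starRingEnd ℂ) u * ((starRingEnd ℂ) e0 * e0 + (starRingEnd ℂ) e1 * e1 + (starRingEnd ℂ) e2 * e2) + x * u * (e0 * (starRingEnd ℂ) g0 + e1 * (starRingEnd ℂ) g1 + e2 * (starRingEnd ℂ) g2) + (starRingEnd ℂ) x * (starRingEnd ℂ) u * ((starRingEnd ℂ) e0 * g0 + (starRingEnd ℂ) e1 * g1 + (starRingEnd ℂ) e2 * g2))) * hnf + (-(x * (starRingEnd ℂ) x * ((starRingEnd ℂ) f0 * f0 + (starRingEnd ℂ) f1 * f1 + (starRingEnd ℂ) f2 * f2) + t * (starRingEnd ℂ) t * ((starRingEnd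 ℂ) e0 * e0 + (starRingEnd ℂ) e1 * e1 + (starRingEnd ℂ) e2 * e2) + x * t * (e0 * (starRingEnd ℂ) f0 + e1 * (starRingEnd ℂ) f1 + e2 * (starRingEnd ℂ) f2) + (starRingEnd ℂ) x * (starRingEnd ℂ) t * ((starRingEnd ℂ) e0 * f0 + (starRingEnd ℂ) e1 * f1 + (starRingEnd ℂ) e2 * f2))) * hng

set_option maxHeartbeats 4000000 in
set_option maxRecDepth 4000 in
private lemma key2 (y z w : ℂ) (e0 e1 e2 f0 f1 f2 g0 g1 g2 : ℂ)
    (hy : y = (starRingEnd ℂ) e0 * f0 + (starRingEnd ℂ) e1 * f1 + (starRingEnd ℂ) e2 * f2)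
    (hz : z = (starRingEnd ℂ) e0 * g0 + (starRingEnd ℂ) e1 * g1 + (starRingEnd ℂ) e2 * g2)
    (hw : w = (starRingEnd ℂ) f0 * g0 + (starRingEnd ℂ) f1 * g1 + (starRingEnd ℂ) f2 * g2)
    (hne : (starRingEnd ℂ) e0 * e0 + (starRingEnd ℂ) e1 * e1 + (starRingEnd ℂ) e2 * e2 = 1)
    (hnf : (starRingEnd ℂ) f0 * f0 + (starRingEnd ℂ) f1 * f1 + (starRingEnd ℂ) f2 * f2 = 1)
    (hng : (starRingEnd ℂ) g0 * g0 + (starRingEnd ℂ) g1 * g1 + (starRingEnd ℂ) g2 * g2 = 1) :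
    6 * (1 + y * w * (starRingEnd ℂ) z + (starRingEnd ℂ) y * (starRingEnd ℂ) w * z + y * (starRingEnd ℂ) y + z * (starRingEnd ℂ) z + w * (starRingEnd ℂ) w) = (starRingEnd ℂ) (e0 * f0 * g0 + e0 * g0 * f0 + f0 * e0 * g0 + f0 * g0 * e0 + g0 * e0 * f0 + g0 * f0 * e0) * (e0 * f0 * g0 + e0 * g0 * f0 + f0 * e0 * g0 + f0 * g0 * e0 + g0 * e0 * f0 + g0 * f0 * e0) + (starRingEnd ℂ) (e0 * f0 * g1 + e0 * g0 * f1 + f0 * e0 * g1 + f0 * g0 * e1 + g0 * e0 * f1 + g0 * f0 * e1) * (e0 * f0 * g1 + e0 * g0 * f1 + f0 * e0 * g1 + f0 * g0 * e1 + g0 * e0 * f1 + g0 * f0 * e1) + (starRingEnd ℂ) (e0 * f0 * g2 + e0 * g0 * f2 + f0 * e0 * g2 + f0 * g0 * e2 + g0 * e0 * f2 + g0 * f0 * e2) * (e0 * f0 * g2 + e0 * g0 * f2 + f0 * e0 * g2 + f0 * g0 * e2 + g0 * e0 * f2 + g0 * f0 * e2) + (starRingEnd ℂ) (e0 * f1 *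 g0 + e0 * g1 * f0 + f0 * e1 * g0 + f0 * g1 * e0 + g0 * e1 * f0 + g0 * f1 * e0) * (e0 * f1 * g0 + e0 * g1 * f0 + f0 * e1 * g0 + f0 * g1 * e0 + g0 * e1 * f0 + g0 * f1 * e0) + (starRingEnd ℂ) (e0 * f1 * g1 + e0 * g1 * f1 + f0 * e1 * g1 + f0 * g1 * e1 + g0 * e1 * f1 + g0 * f1 * e1) * (e0 * f1 * g1 + e0 * g1 * f1 + f0 * e1 * g1 + f0 * g1 * e1 + g0 * e1 * f1 + g0 * f1 * e1) + (starRingEnd ℂ) (e0 * f1 * g2 + e0 * g1 * f2 + f0 * e1 * g2 + f0 * g1 * e2 + g0 * e1 * f2 + g0 * f1 * e2) * (e0 * f1 * g2 + e0 * g1 * f2 + f0 * e1 * g2 + f0 * g1 * e2 + g0 * e1 * f2 + g0 * f1 * e2) + (starRingEnd ℂ) (e0 * f2 * g0 + e0 * g2 * f0 + f0 * e2 * g0 + f0 * g2 * e0 + g0 * e2 * f0 + g0 * f2 * e0) * (e0 * f2 * g0 + e0 * g2 * f0 + f0 * e2 * g0 + f0 * g2 * e0 + g0 * e2 * f0 +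 g0 * f2 * e0) + (starRingEnd ℂ) (e0 * f2 * g1 + e0 * g2 * f1 + f0 * e2 * g1 + f0 * g2 * e1 + g0 * e2 * f1 + g0 * f2 * e1) * (e0 * f2 * g1 + e0 * g2 * f1 + f0 * e2 * g1 + f0 * g2 * e1 + g0 * e2 * f1 + g0 * f2 * e1) + (starRingEnd ℂ) (e0 * f2 * g2 + e0 * g2 * f2 + f0 * e2 * g2 + f0 * g2 * e2 + g0 * e2 * f2 + g0 * f2 * e2) * (e0 * f2 * g2 + e0 * g2 * f2 + f0 * e2 * g2 + f0 * g2 * e2 + g0 * e2 * f2 + g0 * f2 * e2) + (starRingEnd ℂ) (e1 * f0 * g0 + e1 * g0 * f0 + f1 * e0 * g0 + f1 * g0 * e0 + g1 * e0 * f0 + g1 * f0 * e0) * (e1 * f0 * g0 + e1 * g0 * f0 + f1 * e0 * g0 + f1 * g0 * e0 + g1 * e0 * f0 + g1 * f0 * e0) + (starRingEnd ℂ) (e1 * f0 * g1 + e1 * g0 * f1 + f1 * e0 * g1 + f1 * g0 * e1 + g1 * e0 * f1 + g1 * f0 * e1) * (e1 * f0 * g1 + e1 * g0 * f1 + f1 *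 e0 * g1 + f1 * g0 * e1 + g1 * e0 * f1 + g1 * f0 * e1) + (starRingEnd ℂ) (e1 * f0 * g2 + e1 * g0 * f2 + f1 * e0 * g2 + f1 * g0 * e2 + g1 * e0 * f2 + g1 * f0 * e2) * (e1 * f0 * g2 + e1 * g0 * f2 + f1 * e0 * g2 + f1 * g0 * e2 + g1 * e0 * f2 + g1 * f0 * e2) + (starRingEnd ℂ) (e1 * f1 * g0 + e1 * g1 * f0 + f1 * e1 * g0 + f1 * g1 * e0 + g1 * e1 * f0 + g1 * f1 * e0) * (e1 * f1 * g0 + e1 * g1 * f0 + f1 * e1 * g0 + f1 * g1 * e0 + g1 * e1 * f0 + g1 * f1 * e0) + (starRingEnd ℂ) (e1 * f1 * g1 + e1 * g1 * f1 + f1 * e1 * g1 + f1 * g1 * e1 + g1 * e1 * f1 + g1 * f1 * e1) * (e1 * f1 * g1 + e1 * g1 * f1 + f1 * e1 * g1 + f1 * g1 * e1 + g1 * e1 * f1 + g1 * f1 * e1) + (starRingEnd ℂ) (e1 * f1 * g2 + e1 * g1 * f2 + f1 * e1 * g2 + f1 * g1 * e2 + g1 * e1 * f2 + g1 * f1 *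 e2) * (e1 * f1 * g2 + e1 * g1 * f2 + f1 * e1 * g2 + f1 * g1 * e2 + g1 * e1 * f2 + g1 * f1 * e2) + (starRingEnd ℂ) (e1 * f2 * g0 + e1 * g2 * f0 + f1 * e2 * g0 + f1 * g2 * e0 + g1 * e2 * f0 + g1 * f2 * e0) * (e1 * f2 * g0 + e1 * g2 * f0 + f1 * e2 * g0 + f1 * g2 * e0 + g1 * e2 * f0 + g1 * f2 * e0) + (starRingEnd ℂ) (e1 * f2 * g1 + e1 * g2 * f1 + f1 * e2 * g1 + f1 * g2 * e1 + g1 * e2 * f1 + g1 * f2 * e1) * (e1 * f2 * g1 + e1 * g2 * f1 + f1 * e2 * g1 + f1 * g2 * e1 + g1 * e2 * f1 + g1 * f2 * e1) + (starRingEnd ℂ) (e1 * f2 * g2 + e1 * g2 * f2 + f1 * e2 * g2 + f1 * g2 * e2 + g1 * e2 * f2 + g1 * f2 * e2) * (e1 * f2 * g2 + e1 * g2 * f2 + f1 * e2 * g2 + f1 * g2 * e2 + g1 * e2 * f2 + g1 * f2 * e2) + (starRingEnd ℂ) (e2 * f0 * g0 + e2 * g0 * f0 + f2 * e0 * g0 +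 f2 * g0 * e0 + g2 * e0 * f0 + g2 * f0 * e0) * (e2 * f0 * g0 + e2 * g0 * f0 + f2 * e0 * g0 + f2 * g0 * e0 + g2 * e0 * f0 + g2 * f0 * e0) + (starRingEnd ℂ) (e2 * f0 * g1 + e2 * g0 * f1 + f2 * e0 * g1 + f2 * g0 * e1 + g2 * e0 * f1 + g2 * f0 * e1) * (e2 * f0 * g1 + e2 * g0 * f1 + f2 * e0 * g1 + f2 * g0 * e1 + g2 * e0 * f1 + g2 * f0 * e1) + (starRingEnd ℂ) (e2 * f0 * g2 + e2 * g0 * f2 + f2 * e0 * g2 + f2 * g0 * e2 + g2 * e0 * f2 + g2 * f0 * e2) * (e2 * f0 * g2 + e2 * g0 * f2 + f2 * e0 * g2 + f2 * g0 * e2 + g2 * e0 * f2 + g2 * f0 * e2) + (starRingEnd ℂ) (e2 * f1 * g0 + e2 * g1 * f0 + f2 * e1 * g0 + f2 * g1 * e0 + g2 * e1 * f0 + g2 * f1 * e0) * (e2 * f1 * g0 + e2 * g1 * f0 + f2 * e1 * g0 + f2 * g1 * e0 + g2 * e1 * f0 + g2 * f1 * e0) + (starRingEnd ℂ) (e2 *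 f1 * g1 + e2 * g1 * f1 + f2 * e1 * g1 + f2 * g1 * e1 + g2 * e1 * f1 + g2 * f1 * e1) * (e2 * f1 * g1 + e2 * g1 * f1 + f2 * e1 * g1 + f2 * g1 * e1 + g2 * e1 * f1 + g2 * f1 * e1) + (starRingEnd ℂ) (e2 * f1 * g2 + e2 * g1 * f2 + f2 * e1 * g2 + f2 * g1 * e2 + g2 * e1 * f2 + g2 * f1 * e2) * (e2 * f1 * g2 + e2 * g1 * f2 + f2 * e1 * g2 + f2 * g1 * e2 + g2 * e1 * f2 + g2 * f1 * e2) + (starRingEnd ℂ) (e2 * f2 * g0 + e2 * g2 * f0 + f2 * e2 * g0 + f2 * g2 * e0 + g2 * e2 * f0 + g2 * f2 * e0) * (e2 * f2 * g0 + e2 * g2 * f0 + f2 * e2 * g0 + f2 * g2 * e0 + g2 * e2 * f0 + g2 * f2 * e0) + (starRingEnd ℂ) (e2 * f2 * g1 + e2 * g2 * f1 + f2 * e2 * g1 + f2 * g2 * e1 + g2 * e2 * f1 + g2 * f2 * e1) * (e2 * f2 * g1 + e2 * g2 * f1 + f2 * e2 * g1 + f2 * g2 * e1 + g2 * e2 *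 f1 + g2 * f2 * e1) + (starRingEnd ℂ) (e2 * f2 * g2 + e2 * g2 * f2 + f2 * e2 * g2 + f2 * g2 * e2 + g2 * e2 * f2 + g2 * f2 * e2) * (e2 * f2 * g2 + e2 * g2 * f2 + f2 * e2 * g2 + f2 * g2 * e2 + g2 * e2 * f2 + g2 * f2 * e2) := by
  subst hy
  subst hz
  subst hw
  simp only [_root_.map_add, _root_.map_mul, Complex.conj_conj]
  linear_combination (-(6 * (1 + ((starRingEnd ℂ) f0 * g0 + (starRingEnd ℂ) f1 * g1 + (starRingEnd ℂ) f2 * g2) * (f0 * (starRingEnd ℂ) g0 + f1 * (starRingEnd ℂ) g1 + f2 * (starRingEnd ℂ) g2)))) * hne + (-(6 * (((starRingEnd ℂ) e0 * e0 + (starRingEnd ℂ) e1 * e1 + (starRingEnd ℂ) e2 * e2) + ((starRingEnd ℂ) e0 * g0 + (starRingEnd ℂ) e1 * g1 + (starRingEnd ℂ) e2 * g2) * (e0 * (starRingEnd ℂ) g0 + e1 * (starRingEnd ℂ) g1 + e2 * (starRingEnd ℂ) g2)))) * hnf + (-(6 * (((starRingEnd ℂ) e0 * e0 + (starRingEnd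 ℂ) e1 * e1 + (starRingEnd ℂ) e2 * e2) * ((starRingEnd ℂ) f0 * f0 + (starRingEnd ℂ) f1 * f1 + (starRingEnd ℂ) f2 * f2) + ((starRingEnd ℂ) e0 * f0 + (starRingEnd ℂ) e1 * f1 + (starRingEnd ℂ) e2 * f2) * (e0 * (starRingEnd ℂ) f0 + e1 * (starRingEnd ℂ) f1 + e2 * (starRingEnd ℂ) f2)))) * hng

set_option maxHeartbeats 4000000 in
set_option maxRecDepth 8000 in
theorem lemma2_y3 (x y z t u w : ℂ)
    (A : Matrix (Fin 4) (Fin 4) ℂ)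
    (hAdef : A = !![1, x, y, z;
                    (starRingEnd ℂ) x, 1, t, u;
                    (starRingEnd ℂ) y, (starRingEnd ℂ) t, 1, w;
                    (starRingEnd ℂ) z, (starRingEnd ℂ) u, (starRingEnd ℂ) w, 1])
    (hA : A.PosSemidef) :
    ((1 + 2 * (y * w * (starRingEnd ℂ) z).re + ‖y‖ ^ 2 + ‖z‖ ^ 2 + ‖w‖ ^ 2 : ℝ) : ℂ) ≤ A.permanent ∧
      (0 : ℝ) ≤ 1 + 2 * (y * w * (starRingEnd ℂ) z).re + ‖y‖ ^ 2 + ‖z‖ ^ 2 + ‖w‖ ^ 2 := by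
  obtain ⟨N, hN⟩ : ∃ N : Matrix (Fin 3) (Fin 3) ℂ, A.submatrix ![0,2,3] ![0,2,3] = Nᴴ * N := by
    open scoped MatrixOrder Matrix.Norms.L2Operator in
    obtain ⟨N, hN⟩ := CStarAlgebra.nonneg_iff_eq_star_mul_self.mp (hA.submatrix ![0,2,3]).nonneg
    exact ⟨N, hN⟩
  have hent : ∀ i j : Fin 3, A (![0,2,3] i) (![0,2,3] j)
      = (starRingEnd ℂ) (N 0 i) * N 0 j + (starRingEnd ℂ) (N 1 i) * N 1 j
        + (starRingEnd ℂ) (N 2 i) * N 2 j := by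
    intro i j
    have h := congrFun (congrFun hN i) j
    simpa [Matrix.mul_apply, Fin.sum_univ_three, Matrix.conjTranspose_apply,
      Matrix.submatrix_apply] using h
  have hy : y = (starRingEnd ℂ) (N 0 0) * N 0 1 + (starRingEnd ℂ) (N 1 0) * N 1 1
      + (starRingEnd ℂ) (N 2 0) * N 2 1 := by
    simpa [hAdef, Matrix.cons_val_zero, Matrix.cons_val_one, Matrix.head_cons,
      Matrix.cons_val_two, Matrix.cons_val_three, Matrix.vecTail, Matrix.vecHead] using hent 0 1
  have hz : z = (starRingEnd ℂ) (N 0 0) * N 0 2 + (starRingEnd ℂ) (N 1 0) * N 1 2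
      + (starRingEnd ℂ) (N 2 0) * N 2 2 := by
    simpa [hAdef, Matrix.cons_val_zero, Matrix.cons_val_one, Matrix.head_cons,
      Matrix.cons_val_two, Matrix.cons_val_three, Matrix.vecTail, Matrix.vecHead] using hent 0 2
  have hw : w = (starRingEnd ℂ) (N 0 1) * N 0 2 + (starRingEnd ℂ) (N 1 1) * N 1 2
      + (starRingEnd ℂ) (N 2 1) * N 2 2 := by
    simpa [hAdef, Matrix.cons_val_zero, Matrix.cons_val_one, Matrix.head_cons,
      Matrix.cons_val_two, Matrix.cons_val_three, Matrix.vecTail, Matrix.vecHead] using hent 1 2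
  have hne : (starRingEnd ℂ) (N 0 0) * N 0 0 + (starRingEnd ℂ) (N 1 0) * N 1 0
      + (starRingEnd ℂ) (N 2 0) * N 2 0 = 1 := by
    have h := hent 0 0
    simp only [hAdef, Matrix.cons_val_zero, Matrix.cons_val_one, Matrix.head_cons,
      Matrix.cons_val_two, Matrix.cons_val_three, Matrix.vecTail, Matrix.vecHead,
      Matrix.cons_val', Matrix.empty_val', Matrix.cons_val_fin_one, Function.comp] at h
    exact h.symm
  have hnf : (starRingEnd ℂ) (N 0 1) * N 0 1 + (starRingEnd ℂ) (N 1 1) * N 1 1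
      + (starRingEnd ℂ) (N 2 1) * N 2 1 = 1 := by
    have h := hent 1 1
    simp only [hAdef, Matrix.cons_val_zero, Matrix.cons_val_one, Matrix.head_cons,
      Matrix.cons_val_two, Matrix.cons_val_three, Matrix.vecTail, Matrix.vecHead,
      Matrix.cons_val', Matrix.empty_val', Matrix.cons_val_fin_one, Function.comp] at h
    exact h.symm
  have hng : (starRingEnd ℂ) (N 0 2) * N 0 2 + (starRingEnd ℂ) (N 1 2) * N 1 2
      + (starRingEnd ℂ) (N 2 2) * N 2 2 = 1 := by
    have h := hent 2 2
    simp only [hAdef, Matrix.cons_val_zero, Matrix.cons_val_one, Matrix.head_cons,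
      Matrix.cons_val_two, Matrix.cons_val_three, Matrix.vecTail, Matrix.vecHead,
      Matrix.cons_val', Matrix.empty_val', Matrix.cons_val_fin_one, Function.comp] at h
    exact h.symm
  have hperm : A.permanent = 1 + (starRingEnd ℂ) w * w + (starRingEnd ℂ) t * t + (starRingEnd ℂ) t * (starRingEnd ℂ) w * u + (starRingEnd ℂ) u * t * w + (starRingEnd ℂ) u * u + (starRingEnd ℂ) x * x + (starRingEnd ℂ) x * x * (starRingEnd ℂ) w * w + (starRingEnd ℂ) x * (starRingEnd ℂ) t * y + (starRingEnd ℂ) x * (starRingEnd ℂ) t * (starRingEnd ℂ) w * z + (starRingEnd ℂ) x * (starRingEnd ℂ) u * y * w + (starRingEnd ℂ) x * (starRingEnd ℂ) u * z + (starRingEnd ℂ) y * x * t + (starRingEnd ℂ) y * x * (starRingEnd ℂ) w * u + (starRingEnd ℂ) y * y + (starRingEnd ℂ) y * (starRingEnd ℂ) w * z + (starRingEnd ℂ) y * (starRingEnd ℂ) u * y * u + (starRingEnd ℂ) y * (starRingEnd ℂ) u * t * z + (starRingEnd ℂ) z * x * t * w + (starRingEnd ℂ) z * x * u + (starRingEnd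 ℂ) z * y * w + (starRingEnd ℂ) z * z + (starRingEnd ℂ) z * (starRingEnd ℂ) t * y * u + (starRingEnd ℂ) z * (starRingEnd ℂ) t * t * z := by
    rw [hAdef, perm4]
    simp [Matrix.cons_val_two, Matrix.cons_val_three, Matrix.vecTail, Matrix.vecHead]
  have h1 := key1 x t u y z w (N 0 0) (N 1 0) (N 2 0) (N 0 1) (N 1 1) (N 2 1) (N 0 2) (N 1 2) (N 2 2) hy hz hw hne hnf hng
  have h2 := key2 y z w (N 0 0) (N 1 0) (N 2 0) (N 0 1) (N 1 1) (N 2 1) (N 0 2) (N 1 2) (N 2 2) hy hz hw hne hnf hng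
  have hmain := hperm.trans h1
  simp only [← Complex.normSq_eq_conj_mul_self] at hmain h2
  have hR : ((1 + 2 * (y * w * (starRingEnd ℂ) z).re + ‖y‖ ^ 2 + ‖z‖ ^ 2 + ‖w‖ ^ 2 : ℝ) : ℂ) = (1 + y * w * (starRingEnd ℂ) z + (starRingEnd ℂ) y * (starRingEnd ℂ) w * z + y * (starRingEnd ℂ) y + z * (starRingEnd ℂ) z + w * (starRingEnd ℂ) w) := by
    have a1 := Complex.add_conj (y * w * (starRingEnd ℂ) z)
    simp only [_root_.map_mul, Complex.conj_conj] at a1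
    have a2 := Complex.mul_conj y
    have a3 := Complex.mul_conj z
    have a4 := Complex.mul_conj w
    rw [Complex.sq_norm, Complex.sq_norm, Complex.sq_norm]
    push_cast at a1 a2 a3 a4 ⊢
    linear_combination -a1 - a2 - a3 - a4
  have hfin : A.permanent
      = (((1 + 2 * (y * w * (starRingEnd ℂ) z).re + ‖y‖ ^ 2 + ‖z‖ ^ 2 + ‖w‖ ^ 2) + (Complex.normSq ((starRingEnd ℂ) x * (N 0 1 * N 0 2 + N 0 2 * N 0 1) + t * (N 0 0 * N 0 2 + N 0 2 * N 0 0) + u * (N 0 0 * N 0 1 + N 0 1 * N 0 0)) + Complex.normSq ((starRingEnd ℂ) x * (N 0 1 * N 1 2 + N 0 2 * N 1 1) + t * (N 0 0 * N 1 2 + N 0 2 * N 1 0) + u * (N 0 0 * N 1 1 + N 0 1 * N 1 0)) + Complex.normSq ((starRingEnd ℂ) x * (N 0 1 * N 2 2 + N 0 2 * N 2 1) + t * (N 0 0 * N 2 2 + N 0 2 * N 2 0) + u * (N 0 0 * N 2 1 + N 0 1 * N 2 0)) + Complex.normSq ((starRingEnd ℂ) x * (N 1 1 * N 0 2 + N 1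 2 * N 0 1) + t * (N 1 0 * N 0 2 + N 1 2 * N 0 0) + u * (N 1 0 * N 0 1 + N 1 1 * N 0 0)) + Complex.normSq ((starRingEnd ℂ) x * (N 1 1 * N 1 2 + N 1 2 * N 1 1) + t * (N 1 0 * N 1 2 + N 1 2 * N 1 0) + u * (N 1 0 * N 1 1 + N 1 1 * N 1 0)) + Complex.normSq ((starRingEnd ℂ) x * (N 1 1 * N 2 2 + N 1 2 * N 2 1) + t * (N 1 0 * N 2 2 + N 1 2 * N 2 0) + u * (N 1 0 * N 2 1 + N 1 1 * N 2 0)) + Complex.normSq ((starRingEnd ℂ) x * (N 2 1 * N 0 2 + N 2 2 * N 0 1) + t * (N 2 0 * N 0 2 + N 2 2 * N 0 0) + u * (N 2 0 * N 0 1 + N 2 1 * N 0 0)) + Complex.normSq ((starRingEnd ℂ) x * (N 2 1 * N 1 2 + N 2 2 * N 1 1) + t * (N 2 0 * N 1 2 + N 2 2 * N 1 0) + u * (N 2 0 * N 1 1 + N 2 1 * N 1 0)) + Complex.normSq ((starRingEnd ℂ) x * (N 2 1 * N 2 2 + N 2 2 * N 2 1) + t * (N 2 0 * N 2 2 + N 2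 2 * N 2 0) + u * (N 2 0 * N 2 1 + N 2 1 * N 2 0))) / 2 : ℝ) : ℂ) := by
    rw [hmain, ← hR]
    push_cast
    ring
  constructor
  · rw [hfin]
    rw [Complex.real_le_real]
    linarith [Complex.normSq_nonneg ((starRingEnd ℂ) x * (N 0 1 * N 0 2 + N 0 2 * N 0 1) + t * (N 0 0 * N 0 2 + N 0 2 * N 0 0) + u * (N 0 0 * N 0 1 + N 0 1 * N 0 0)), Complex.normSq_nonneg ((starRingEnd ℂ) x * (N 0 1 * N 1 2 + N 0 2 * N 1 1) + t * (N 0 0 * N 1 2 + N 0 2 * N 1 0) + u * (N 0 0 * N 1 1 + N 0 1 * N 1 0)), Complex.normSq_nonneg ((starRingEnd ℂ) x * (N 0 1 * N 2 2 + N 0 2 * N 2 1) + t * (N 0 0 * N 2 2 + N 0 2 * N 2 0) + u * (N 0 0 * N 2 1 + N 0 1 * N 2 0)), Complex.normSq_nonneg ((starRingEnd ℂ) x * (N 1 1 * N 0 2 + N 1 2 * N 0 1) + t * (N 1 0 * N 0 2 + N 1 2 * N 0 0) + u * (N 1 0 * N 0 1 + N 1 1 * N 0 0)), Complex.normSq_nonneg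 ((starRingEnd ℂ) x * (N 1 1 * N 1 2 + N 1 2 * N 1 1) + t * (N 1 0 * N 1 2 + N 1 2 * N 1 0) + u * (N 1 0 * N 1 1 + N 1 1 * N 1 0)), Complex.normSq_nonneg ((starRingEnd ℂ) x * (N 1 1 * N 2 2 + N 1 2 * N 2 1) + t * (N 1 0 * N 2 2 + N 1 2 * N 2 0) + u * (N 1 0 * N 2 1 + N 1 1 * N 2 0)), Complex.normSq_nonneg ((starRingEnd ℂ) x * (N 2 1 * N 0 2 + N 2 2 * N 0 1) + t * (N 2 0 * N 0 2 + N 2 2 * N 0 0) + u * (N 2 0 * N 0 1 + N 2 1 * N 0 0)), Complex.normSq_nonneg ((starRingEnd ℂ) x * (N 2 1 * N 1 2 + N 2 2 * N 1 1) + t * (N 2 0 * N 1 2 + N 2 2 * N 1 0) + u * (N 2 0 * N 1 1 + N 2 1 * N 1 0)), Complex.normSq_nonneg ((starRingEnd ℂ) x * (N 2 1 * N 2 2 + N 2 2 * N 2 1) + t * (N 2 0 * N 2 2 + N 2 2 * N 2 0) + u * (N 2 0 * N 2 1 + N 2 1 * N 2 0))]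
  · have hc : ((6 * (1 + 2 * (y * w * (starRingEnd ℂ) z).re + ‖y‖ ^ 2 + ‖z‖ ^ 2 + ‖w‖ ^ 2) : ℝ) : ℂ) = ((Complex.normSq (N 0 0 * N 0 1 * N 0 2 + N 0 0 * N 0 2 * N 0 1 + N 0 1 * N 0 0 * N 0 2 + N 0 1 * N 0 2 * N 0 0 + N 0 2 * N 0 0 * N 0 1 + N 0 2 * N 0 1 * N 0 0) + Complex.normSq (N 0 0 * N 0 1 * N 1 2 + N 0 0 * N 0 2 * N 1 1 + N 0 1 * N 0 0 * N 1 2 + N 0 1 * N 0 2 * N 1 0 + N 0 2 * N 0 0 * N 1 1 + N 0 2 * N 0 1 * N 1 0) + Complex.normSq (N 0 0 * N 0 1 * N 2 2 + N 0 0 * N 0 2 * N 2 1 + N 0 1 * N 0 0 * N 2 2 + N 0 1 * N 0 2 * N 2 0 + N 0 2 * N 0 0 * N 2 1 + N 0 2 * N 0 1 * N 2 0) + Complex.normSq (N 0 0 * N 1 1 * N 0 2 + N 0 0 * N 1 2 * N 0 1 + N 0 1 * N 1 0 * N 0 2 + N 0 1 * N 1 2 * N 0 0 + N 0 2 * N 1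 0 * N 0 1 + N 0 2 * N 1 1 * N 0 0) + Complex.normSq (N 0 0 * N 1 1 * N 1 2 + N 0 0 * N 1 2 * N 1 1 + N 0 1 * N 1 0 * N 1 2 + N 0 1 * N 1 2 * N 1 0 + N 0 2 * N 1 0 * N 1 1 + N 0 2 * N 1 1 * N 1 0) + Complex.normSq (N 0 0 * N 1 1 * N 2 2 + N 0 0 * N 1 2 * N 2 1 + N 0 1 * N 1 0 * N 2 2 + N 0 1 * N 1 2 * N 2 0 + N 0 2 * N 1 0 * N 2 1 + N 0 2 * N 1 1 * N 2 0) + Complex.normSq (N 0 0 * N 2 1 * N 0 2 + N 0 0 * N 2 2 * N 0 1 + N 0 1 * N 2 0 * N 0 2 + N 0 1 * N 2 2 * N 0 0 + N 0 2 * N 2 0 * N 0 1 + N 0 2 * N 2 1 * N 0 0) + Complex.normSq (N 0 0 * N 2 1 * N 1 2 + N 0 0 * N 2 2 * N 1 1 + N 0 1 * N 2 0 * N 1 2 + N 0 1 * N 2 2 * N 1 0 + N 0 2 * N 2 0 * N 1 1 + N 0 2 * N 2 1 * N 1 0) + Complex.normSq (N 0 0 * N 2 1 * N 2 2 + N 0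 0 * N 2 2 * N 2 1 + N 0 1 * N 2 0 * N 2 2 + N 0 1 * N 2 2 * N 2 0 + N 0 2 * N 2 0 * N 2 1 + N 0 2 * N 2 1 * N 2 0) + Complex.normSq (N 1 0 * N 0 1 * N 0 2 + N 1 0 * N 0 2 * N 0 1 + N 1 1 * N 0 0 * N 0 2 + N 1 1 * N 0 2 * N 0 0 + N 1 2 * N 0 0 * N 0 1 + N 1 2 * N 0 1 * N 0 0) + Complex.normSq (N 1 0 * N 0 1 * N 1 2 + N 1 0 * N 0 2 * N 1 1 + N 1 1 * N 0 0 * N 1 2 + N 1 1 * N 0 2 * N 1 0 + N 1 2 * N 0 0 * N 1 1 + N 1 2 * N 0 1 * N 1 0) + Complex.normSq (N 1 0 * N 0 1 * N 2 2 + N 1 0 * N 0 2 * N 2 1 + N 1 1 * N 0 0 * N 2 2 + N 1 1 * N 0 2 * N 2 0 + N 1 2 * N 0 0 * N 2 1 + N 1 2 * N 0 1 * N 2 0) + Complex.normSq (N 1 0 * N 1 1 * N 0 2 + N 1 0 * N 1 2 * N 0 1 + N 1 1 * N 1 0 * N 0 2 + N 1 1 * N 1 2 * N 0 0 + N 1 2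 * N 1 0 * N 0 1 + N 1 2 * N 1 1 * N 0 0) + Complex.normSq (N 1 0 * N 1 1 * N 1 2 + N 1 0 * N 1 2 * N 1 1 + N 1 1 * N 1 0 * N 1 2 + N 1 1 * N 1 2 * N 1 0 + N 1 2 * N 1 0 * N 1 1 + N 1 2 * N 1 1 * N 1 0) + Complex.normSq (N 1 0 * N 1 1 * N 2 2 + N 1 0 * N 1 2 * N 2 1 + N 1 1 * N 1 0 * N 2 2 + N 1 1 * N 1 2 * N 2 0 + N 1 2 * N 1 0 * N 2 1 + N 1 2 * N 1 1 * N 2 0) + Complex.normSq (N 1 0 * N 2 1 * N 0 2 + N 1 0 * N 2 2 * N 0 1 + N 1 1 * N 2 0 * N 0 2 + N 1 1 * N 2 2 * N 0 0 + N 1 2 * N 2 0 * N 0 1 + N 1 2 * N 2 1 * N 0 0) + Complex.normSq (N 1 0 * N 2 1 * N 1 2 + N 1 0 * N 2 2 * N 1 1 + N 1 1 * N 2 0 * N 1 2 + N 1 1 * N 2 2 * N 1 0 + N 1 2 * N 2 0 * N 1 1 + N 1 2 * N 2 1 * N 1 0) + Complex.normSq (N 1 0 * N 2 1 * N 2 2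 + N 1 0 * N 2 2 * N 2 1 + N 1 1 * N 2 0 * N 2 2 + N 1 1 * N 2 2 * N 2 0 + N 1 2 * N 2 0 * N 2 1 + N 1 2 * N 2 1 * N 2 0) + Complex.normSq (N 2 0 * N 0 1 * N 0 2 + N 2 0 * N 0 2 * N 0 1 + N 2 1 * N 0 0 * N 0 2 + N 2 1 * N 0 2 * N 0 0 + N 2 2 * N 0 0 * N 0 1 + N 2 2 * N 0 1 * N 0 0) + Complex.normSq (N 2 0 * N 0 1 * N 1 2 + N 2 0 * N 0 2 * N 1 1 + N 2 1 * N 0 0 * N 1 2 + N 2 1 * N 0 2 * N 1 0 + N 2 2 * N 0 0 * N 1 1 + N 2 2 * N 0 1 * N 1 0) + Complex.normSq (N 2 0 * N 0 1 * N 2 2 + N 2 0 * N 0 2 * N 2 1 + N 2 1 * N 0 0 * N 2 2 + N 2 1 * N 0 2 * N 2 0 + N 2 2 * N 0 0 * N 2 1 + N 2 2 * N 0 1 * N 2 0) + Complex.normSq (N 2 0 * N 1 1 * N 0 2 + N 2 0 * N 1 2 * N 0 1 + N 2 1 * N 1 0 * N 0 2 + N 2 1 * N 1 2 * N 0 0 +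 N 2 2 * N 1 0 * N 0 1 + N 2 2 * N 1 1 * N 0 0) + Complex.normSq (N 2 0 * N 1 1 * N 1 2 + N 2 0 * N 1 2 * N 1 1 + N 2 1 * N 1 0 * N 1 2 + N 2 1 * N 1 2 * N 1 0 + N 2 2 * N 1 0 * N 1 1 + N 2 2 * N 1 1 * N 1 0) + Complex.normSq (N 2 0 * N 1 1 * N 2 2 + N 2 0 * N 1 2 * N 2 1 + N 2 1 * N 1 0 * N 2 2 + N 2 1 * N 1 2 * N 2 0 + N 2 2 * N 1 0 * N 2 1 + N 2 2 * N 1 1 * N 2 0) + Complex.normSq (N 2 0 * N 2 1 * N 0 2 + N 2 0 * N 2 2 * N 0 1 + N 2 1 * N 2 0 * N 0 2 + N 2 1 * N 2 2 * N 0 0 + N 2 2 * N 2 0 * N 0 1 + N 2 2 * N 2 1 * N 0 0) + Complex.normSq (N 2 0 * N 2 1 * N 1 2 + N 2 0 * N 2 2 * N 1 1 + N 2 1 * N 2 0 * N 1 2 + N 2 1 * N 2 2 * N 1 0 + N 2 2 * N 2 0 * N 1 1 + N 2 2 * N 2 1 * N 1 0) + Complex.normSq (N 2 0 * N 2 1 *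 N 2 2 + N 2 0 * N 2 2 * N 2 1 + N 2 1 * N 2 0 * N 2 2 + N 2 1 * N 2 2 * N 2 0 + N 2 2 * N 2 0 * N 2 1 + N 2 2 * N 2 1 * N 2 0) : ℝ) : ℂ) := by
      rw [show ((6 * (1 + 2 * (y * w * (starRingEnd ℂ) z).re + ‖y‖ ^ 2 + ‖z‖ ^ 2 + ‖w‖ ^ 2) : ℝ) : ℂ) = 6 * ((1 + 2 * (y * w * (starRingEnd ℂ) z).re + ‖y‖ ^ 2 + ‖z‖ ^ 2 + ‖w‖ ^ 2 : ℝ) : ℂ) by push_cast; ring, hR, h2]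
      push_cast
      ring
    have hr := Complex.ofReal_inj.mp hc
    linarith [Complex.normSq_nonneg (N 0 0 * N 0 1 * N 0 2 + N 0 0 * N 0 2 * N 0 1 + N 0 1 * N 0 0 * N 0 2 + N 0 1 * N 0 2 * N 0 0 + N 0 2 * N 0 0 * N 0 1 + N 0 2 * N 0 1 * N 0 0), Complex.normSq_nonneg (N 0 0 * N 0 1 * N 1 2 + N 0 0 * N 0 2 * N 1 1 + N 0 1 * N 0 0 * N 1 2 + N 0 1 * N 0 2 * N 1 0 + N 0 2 * N 0 0 * N 1 1 + N 0 2 * N 0 1 * N 1 0), Complex.normSq_nonneg (N 0 0 * N 0 1 * N 2 2 + N 0 0 * N 0 2 * N 2 1 + N 0 1 * N 0 0 * N 2 2 + N 0 1 * N 0 2 * N 2 0 + N 0 2 * N 0 0 * N 2 1 + N 0 2 * N 0 1 * N 2 0), Complex.normSq_nonneg (N 0 0 * N 1 1 * N 0 2 + N 0 0 * N 1 2 * N 0 1 + N 0 1 * N 1 0 * N 0 2 + N 0 1 * N 1 2 * N 0 0 + N 0 2 * N 1 0 * N 0 1 + N 0 2 * N 1 1 * N 0 0), Complex.normSq_nonneg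 (N 0 0 * N 1 1 * N 1 2 + N 0 0 * N 1 2 * N 1 1 + N 0 1 * N 1 0 * N 1 2 + N 0 1 * N 1 2 * N 1 0 + N 0 2 * N 1 0 * N 1 1 + N 0 2 * N 1 1 * N 1 0), Complex.normSq_nonneg (N 0 0 * N 1 1 * N 2 2 + N 0 0 * N 1 2 * N 2 1 + N 0 1 * N 1 0 * N 2 2 + N 0 1 * N 1 2 * N 2 0 + N 0 2 * N 1 0 * N 2 1 + N 0 2 * N 1 1 * N 2 0), Complex.normSq_nonneg (N 0 0 * N 2 1 * N 0 2 + N 0 0 * N 2 2 * N 0 1 + N 0 1 * N 2 0 * N 0 2 + N 0 1 * N 2 2 * N 0 0 + N 0 2 * N 2 0 * N 0 1 + N 0 2 * N 2 1 * N 0 0), Complex.normSq_nonneg (N 0 0 * N 2 1 * N 1 2 + N 0 0 * N 2 2 * N 1 1 + N 0 1 * N 2 0 * N 1 2 + N 0 1 * N 2 2 * N 1 0 + N 0 2 * N 2 0 * N 1 1 + N 0 2 * N 2 1 * N 1 0), Complex.normSq_nonneg (N 0 0 * N 2 1 * N 2 2 + N 0 0 * N 2 2 * N 2 1 + N 0 1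 * N 2 0 * N 2 2 + N 0 1 * N 2 2 * N 2 0 + N 0 2 * N 2 0 * N 2 1 + N 0 2 * N 2 1 * N 2 0), Complex.normSq_nonneg (N 1 0 * N 0 1 * N 0 2 + N 1 0 * N 0 2 * N 0 1 + N 1 1 * N 0 0 * N 0 2 + N 1 1 * N 0 2 * N 0 0 + N 1 2 * N 0 0 * N 0 1 + N 1 2 * N 0 1 * N 0 0), Complex.normSq_nonneg (N 1 0 * N 0 1 * N 1 2 + N 1 0 * N 0 2 * N 1 1 + N 1 1 * N 0 0 * N 1 2 + N 1 1 * N 0 2 * N 1 0 + N 1 2 * N 0 0 * N 1 1 + N 1 2 * N 0 1 * N 1 0), Complex.normSq_nonneg (N 1 0 * N 0 1 * N 2 2 + N 1 0 * N 0 2 * N 2 1 + N 1 1 * N 0 0 * N 2 2 + N 1 1 * N 0 2 * N 2 0 + N 1 2 * N 0 0 * N 2 1 + N 1 2 * N 0 1 * N 2 0), Complex.normSq_nonneg (N 1 0 * N 1 1 * N 0 2 + N 1 0 * N 1 2 * N 0 1 + N 1 1 * N 1 0 * N 0 2 + N 1 1 * N 1 2 * N 0 0 + N 1 2 * N 1 0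 * N 0 1 + N 1 2 * N 1 1 * N 0 0), Complex.normSq_nonneg (N 1 0 * N 1 1 * N 1 2 + N 1 0 * N 1 2 * N 1 1 + N 1 1 * N 1 0 * N 1 2 + N 1 1 * N 1 2 * N 1 0 + N 1 2 * N 1 0 * N 1 1 + N 1 2 * N 1 1 * N 1 0), Complex.normSq_nonneg (N 1 0 * N 1 1 * N 2 2 + N 1 0 * N 1 2 * N 2 1 + N 1 1 * N 1 0 * N 2 2 + N 1 1 * N 1 2 * N 2 0 + N 1 2 * N 1 0 * N 2 1 + N 1 2 * N 1 1 * N 2 0), Complex.normSq_nonneg (N 1 0 * N 2 1 * N 0 2 + N 1 0 * N 2 2 * N 0 1 + N 1 1 * N 2 0 * N 0 2 + N 1 1 * N 2 2 * N 0 0 + N 1 2 * N 2 0 * N 0 1 + N 1 2 * N 2 1 * N 0 0), Complex.normSq_nonneg (N 1 0 * N 2 1 * N 1 2 + N 1 0 * N 2 2 * N 1 1 + N 1 1 * N 2 0 * N 1 2 + N 1 1 * N 2 2 * N 1 0 + N 1 2 * N 2 0 * N 1 1 + N 1 2 * N 2 1 * N 1 0), Complex.normSq_nonneg (N 1 0 *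 N 2 1 * N 2 2 + N 1 0 * N 2 2 * N 2 1 + N 1 1 * N 2 0 * N 2 2 + N 1 1 * N 2 2 * N 2 0 + N 1 2 * N 2 0 * N 2 1 + N 1 2 * N 2 1 * N 2 0), Complex.normSq_nonneg (N 2 0 * N 0 1 * N 0 2 + N 2 0 * N 0 2 * N 0 1 + N 2 1 * N 0 0 * N 0 2 + N 2 1 * N 0 2 * N 0 0 + N 2 2 * N 0 0 * N 0 1 + N 2 2 * N 0 1 * N 0 0), Complex.normSq_nonneg (N 2 0 * N 0 1 * N 1 2 + N 2 0 * N 0 2 * N 1 1 + N 2 1 * N 0 0 * N 1 2 + N 2 1 * N 0 2 * N 1 0 + N 2 2 * N 0 0 * N 1 1 + N 2 2 * N 0 1 * N 1 0), Complex.normSq_nonneg (N 2 0 * N 0 1 * N 2 2 + N 2 0 * N 0 2 * N 2 1 + N 2 1 * N 0 0 * N 2 2 + N 2 1 * N 0 2 * N 2 0 + N 2 2 * N 0 0 * N 2 1 + N 2 2 * N 0 1 * N 2 0), Complex.normSq_nonneg (N 2 0 * N 1 1 * N 0 2 + N 2 0 * N 1 2 * N 0 1 + N 2 1 * N 1 0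 * N 0 2 + N 2 1 * N 1 2 * N 0 0 + N 2 2 * N 1 0 * N 0 1 + N 2 2 * N 1 1 * N 0 0), Complex.normSq_nonneg (N 2 0 * N 1 1 * N 1 2 + N 2 0 * N 1 2 * N 1 1 + N 2 1 * N 1 0 * N 1 2 + N 2 1 * N 1 2 * N 1 0 + N 2 2 * N 1 0 * N 1 1 + N 2 2 * N 1 1 * N 1 0), Complex.normSq_nonneg (N 2 0 * N 1 1 * N 2 2 + N 2 0 * N 1 2 * N 2 1 + N 2 1 * N 1 0 * N 2 2 + N 2 1 * N 1 2 * N 2 0 + N 2 2 * N 1 0 * N 2 1 + N 2 2 * N 1 1 * N 2 0), Complex.normSq_nonneg (N 2 0 * N 2 1 * N 0 2 + N 2 0 * N 2 2 * N 0 1 + N 2 1 * N 2 0 * N 0 2 + N 2 1 * N 2 2 * N 0 0 + N 2 2 * N 2 0 * N 0 1 + N 2 2 * N 2 1 * N 0 0), Complex.normSq_nonneg (N 2 0 * N 2 1 * N 1 2 + N 2 0 * N 2 2 * N 1 1 + N 2 1 * N 2 0 * N 1 2 + N 2 1 * N 2 2 * N 1 0 + N 2 2 * N 2 0 * N 1 1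 + N 2 2 * N 2 1 * N 1 0), Complex.normSq_nonneg (N 2 0 * N 2 1 * N 2 2 + N 2 0 * N 2 2 * N 2 1 + N 2 1 * N 2 0 * N 2 2 + N 2 1 * N 2 2 * N 2 0 + N 2 2 * N 2 0 * N 2 1 + N 2 2 * N 2 1 * N 2 0)]
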